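/- Let n ≥ 1 and let G be a finite subgroup of GL(n, ℝ), acting on ℝⁿ by matrix–vector multiplication. Let f : ℝⁿ → ℝⁿ be continuously differentiable and let f' : ℝⁿ → ℝⁿ be a bijection such that both f' and its inverse are continuously differentiable. Suppose that for every x ∈ ℝⁿ there exists μ ∈ G with f(x) = μ·f'(x). Then there exists a unique μ ∈ G such that f(x) = μ·f'(x) for all x ∈ ℝⁿ. -/

import Mathlib

/-- Two C¹ lifts of the same map differ by a unique element of the
finite linear group G: if f(x) = μ·f'(x) pointwise for varying μ ∈ G, then a single
μ ∈ G works for all x. -/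
theorem lifts_differ_by_unique_group_element
    (n : ℕ) (hn : 1 ≤ n) (G : Subgroup (GL (Fin n) ℝ)) [Finite G]
    (f f' f'inv : (Fin n → ℝ) → (Fin n → ℝ))
    (hf : ContDiff ℝ 1 f) (hf' : ContDiff ℝ 1 f') (hf'inv : ContDiff ℝ 1 f'inv)
    (hleft : Function.LeftInverse f'inv f') (hright : Function.RightInverse f'inv f')
    (hlift : ∀ x : Fin n → ℝ, ∃ μ ∈ G,
      f x = Matrix.mulVec ((μ : GL (Fin n) ℝ) : Matrix (Fin n) (Fin n) ℝ) (f' x)) :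
    ∃! μ : G, ∀ x : Fin n → ℝ,
      f x = Matrix.mulVec (((μ : GL (Fin n) ℝ)) : Matrix (Fin n) (Fin n) ℝ) (f' x) := by
  classical
  -- continuous linear map associated to a group element
  let L : G → ((Fin n → ℝ) →L[ℝ] (Fin n → ℝ)) := fun μ =>
    LinearMap.toContinuousLinearMap
      (Matrix.mulVecLin ((μ : GL (Fin n) ℝ) : Matrix (Fin n) (Fin n) ℝ))
  have hLapp : ∀ (μ : G) (y : Fin n → ℝ),
      L μ y = Matrix.mulVec ((μ : GL (Fin n) ℝ) : Matrix (Fin n) (Fin n) ℝ) y := by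
    intro μ y
    simp [L, Matrix.mulVecLin_apply]
  -- the composed map g = f ∘ f'inv
  set g : (Fin n → ℝ) → (Fin n → ℝ) := f ∘ f'inv with hgdef
  have hgC : ContDiff ℝ 1 g := hf.comp hf'inv
  have hgd : Differentiable ℝ g := hgC.differentiable one_ne_zero
  have hDcont : Continuous (fderiv ℝ g) := (contDiff_one_iff_fderiv.mp hgC).2
  have hgl : ∀ y, ∃ μ : G, g y = L μ y := by
    intro y
    obtain ⟨μ, hμ, h⟩ := hlift (f'inv y)
    refine ⟨⟨μ, hμ⟩, ?_⟩
    rw [hLapp]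
    simpa [hgdef, hright y] using h
  -- the closed sets where g agrees with a fixed linear map
  let S : G → Set (Fin n → ℝ) := fun μ => {y | g y = L μ y}
  have hSclosed : ∀ μ, IsClosed (S μ) := fun μ =>
    isClosed_eq hgC.continuous (L μ).continuous
  have hScover : ⋃ μ, S μ = Set.univ := by
    ext y
    simp only [Set.mem_iUnion, Set.mem_univ, iff_true]
    obtain ⟨μ, hμ⟩ := hgl y
    exact ⟨μ, hμ⟩
  have hdense : Dense (⋃ μ, interior (S μ)) :=
    dense_iUnion_interior_of_closed hSclosed hScover
  -- the derivative of g on interiors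
  have hD_int : ∀ μ, ∀ y ∈ interior (S μ), fderiv ℝ g y = L μ := by
    intro μ y hy
    have hev : g =ᶠ[nhds y] (L μ) := by
      filter_upwards [isOpen_interior.mem_nhds hy] with z hz
      exact (interior_subset hz : z ∈ S μ)
    rw [hev.fderiv_eq, (L μ).fderiv]
  -- the derivative always lies in the finite set of group matrices
  let T : Set ((Fin n → ℝ) →L[ℝ] (Fin n → ℝ)) := Set.range L
  have hTfin : T.Finite := Set.finite_range L
  have hTclosed : IsClosed T := hTfin.isClosed
  have hDT : ∀ y, fderiv ℝ g y ∈ T := by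
    have hsub : (⋃ μ, interior (S μ)) ⊆ fderiv ℝ g ⁻¹' T := by
      intro y hy
      obtain ⟨μ, hμ⟩ := Set.mem_iUnion.mp hy
      exact ⟨μ, (hD_int μ y hμ).symm⟩
    have hcl : IsClosed (fderiv ℝ g ⁻¹' T) := hTclosed.preimage hDcont
    have : Dense (fderiv ℝ g ⁻¹' T) := hdense.mono hsub
    intro y
    have := hcl.closure_eq ▸ this.closure_eq
    exact (this ▸ Set.mem_univ y : y ∈ fderiv ℝ g ⁻¹' T)
  obtain ⟨μ₀, hμ₀⟩ : ∃ μ, fderiv ℝ g 0 = L μ := by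
    obtain ⟨μ, h⟩ := hDT 0
    exact ⟨μ, h.symm⟩
  -- the derivative is constant by connectedness
  have hconst : ∀ y, fderiv ℝ g y = L μ₀ := by
    set C : Set (Fin n → ℝ) := fderiv ℝ g ⁻¹' {L μ₀} with hCdef
    have hCc : IsClosed C := isClosed_singleton.preimage hDcont
    have hCcc : IsClosed Cᶜ := by
      have hcompl : Cᶜ = fderiv ℝ g ⁻¹' (T \ {L μ₀}) := by
        ext y
        simp only [hCdef, Set.mem_compl_iff, Set.mem_preimage, Set.mem_singleton_iff,
          Set.mem_diff]
        exact ⟨fun h => ⟨hDT y, h⟩, fun h => h.2⟩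
      rw [hcompl]
      exact ((hTfin.subset Set.diff_subset).isClosed).preimage hDcont
    have hclopen : IsClopen C := ⟨hCc, isClosed_compl_iff.mp hCcc⟩
    have h0C : (0 : Fin n → ℝ) ∈ C := hμ₀
    rcases isClopen_iff.mp hclopen with h | h
    · exact absurd (h ▸ h0C) (Set.notMem_empty _)
    · intro y
      exact (h ▸ Set.mem_univ y : y ∈ C)
  -- hence g is linear
  have hg0 : g 0 = 0 := by
    obtain ⟨μ, hμ⟩ := hgl 0
    rw [hμ, map_zero]
  have key : ∀ y, g y = L μ₀ y := by
    intro y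
    have hdiff : Differentiable ℝ (fun z => g z - L μ₀ z) :=
      hgd.sub (L μ₀).differentiable
    have hzero : ∀ z, fderiv ℝ (fun z => g z - L μ₀ z) z = 0 := by
      intro z
      rw [fderiv_fun_sub (hgd z) ((L μ₀).differentiableAt), (L μ₀).fderiv, hconst z, sub_self]
    have h0 := is_const_of_fderiv_eq_zero hdiff hzero y 0
    have : g y - L μ₀ y = g 0 - L μ₀ 0 := h0
    rw [hg0, map_zero, sub_self] at this
    exact sub_eq_zero.mp this
  refine ⟨μ₀, ?_, ?_⟩
  · intro x
    have h := key (f' x)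
    rw [← hLapp]
    simpa [hgdef, hleft x] using h
  · intro ν hν
    have hagree : ∀ y : Fin n → ℝ,
        Matrix.mulVec ((ν : GL (Fin n) ℝ) : Matrix (Fin n) (Fin n) ℝ) y =
        Matrix.mulVec ((μ₀ : GL (Fin n) ℝ) : Matrix (Fin n) (Fin n) ℝ) y := by
      intro y
      have h1 := hν (f'inv y)
      have h2 := key y
      rw [hright y] at h1
      rw [hLapp] at h2
      rw [← h1]
      have : g y = f (f'inv y) := rfl
      rw [← this, h2]
    have hmat : ((ν : GL (Fin n) ℝ) : Matrix (Fin n) (Fin n) ℝ) =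
        ((μ₀ : GL (Fin n) ℝ) : Matrix (Fin n) (Fin n) ℝ) := by
      ext i j
      have := hagree (Pi.single j 1)
      rw [Matrix.mulVec_single_one, Matrix.mulVec_single_one] at this
      exact congrFun this i
    exact Subtype.ext (Units.ext hmat)
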